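/- Let R be a finite commutative ring and m ≤ n. Any linearly independent family α_1,…,α_m of vectors in R^n can be extended to a basis α_1,…,α_n of R^n whose matrix of rows is invertible. -/

import Mathlib

open Matrix

-- idempotent power in finite monoid
lemma exists_idem_pow {R : Type*} [CommMonoid R] [Finite R] (y : R) :
    ∃ k : ℕ, 0 < k ∧ y ^ (2*k) = y ^ k := by
  obtain ⟨i, j, hij, h⟩ := Finite.exists_ne_map_eq_of_infinite (fun k : ℕ => y ^ k)
  wlog hlt : i < j generalizing i j
  · exact this j i hij.symm h.symm (by omega)
  set d := j - i with hd
  have hd0 : 0 < d := by omega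
  have key : ∀ a, i ≤ a → y ^ (a + d) = y ^ a := by
    intro a ha
    obtain ⟨b, rfl⟩ := Nat.exists_eq_add_of_le ha
    have : y ^ (i + d) = y ^ i := by
      rw [hd]; rw [show i + (j - i) = j by omega]; exact h.symm
    rw [show i + b + d = (i + d) + b by omega, pow_add, this, ← pow_add]
  have key2 : ∀ t : ℕ, ∀ a, i ≤ a → y ^ (a + t * d) = y ^ a := by
    intro t
    induction t with
    | zero => simp
    | succ s ih =>
      intro a ha
      have : a + (s+1) * d = (a + d) + s * d := by ring
      rw [this, ih _ (by omega), key _ ha]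
  refine ⟨(i+1) * d, by positivity, ?_⟩
  have := key2 (i+1) ((i+1)*d) (Nat.le_of_lt (by nlinarith))
  rw [← this, show (i+1)*d + (i+1)*d = 2*((i+1)*d) by ring]


-- dichotomy
lemma idem_or_unit_nilpotent {R : Type*} [CommRing R] [Fintype R] :
    (∃ e : R, e * e = e ∧ e ≠ 0 ∧ e ≠ 1) ∨ (∀ y : R, IsUnit y ∨ IsNilpotent y) := by
  by_cases h : ∃ e : R, e * e = e ∧ e ≠ 0 ∧ e ≠ 1
  · exact Or.inl h
  · push_neg at h
    refine Or.inr fun y => ?_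
    obtain ⟨k, hk, hkk⟩ := exists_idem_pow y
    have hidem : (y ^ k) * (y ^ k) = y ^ k := by rw [← pow_add, ← hkk]; ring_nf
    by_cases h0 : y ^ k = 0
    · exact Or.inr ⟨k, h0⟩
    · have h1 : y ^ k = 1 := h _ hidem h0
      left
      exact IsUnit.of_mul_eq_one (a := y) (y ^ (k-1)) (by
        rw [← pow_succ']; rwa [show k - 1 + 1 = k by omega])

-- common annihilator of nilpotents
lemma common_ann {R : Type*} [CommRing R] [Nontrivial R] {ι : Type*} (s : Finset ι)
    (f : ι → R) (h : ∀ i ∈ s, IsNilpotent (f i)) :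
    ∃ r : R, r ≠ 0 ∧ ∀ i ∈ s, r * f i = 0 := by
  classical
  induction s using Finset.induction_on with
  | empty => exact ⟨1, one_ne_zero, by simp⟩
  | insert a s ha ih =>
    obtain ⟨r, hr, hann⟩ := ih (fun i hi => h i (Finset.mem_insert_of_mem hi))
    obtain ⟨K, hK⟩ := h a (Finset.mem_insert_self a s)
    have hex : ∃ k, r * (f a) ^ k = 0 := ⟨K, by rw [hK, mul_zero]⟩
    set k := Nat.find hex with hkdef
    have hk0 : r * (f a) ^ k = 0 := Nat.find_spec hex
    rcases Nat.eq_zero_or_pos k with hk | hk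
    · rw [hk] at hk0; simp at hk0; exact absurd hk0 hr
    · refine ⟨r * (f a) ^ (k-1), ?_, ?_⟩
      · exact Nat.find_min hex (by omega)
      · intro i hi
        rcases Finset.mem_insert.mp hi with rfl | hi
        · rw [mul_assoc, ← pow_succ, show k - 1 + 1 = k by omega]; exact hk0
        · rw [show r * f a ^ (k-1) * f i = r * f i * f a ^ (k-1) by ring, hann i hi, zero_mul]


lemma row_mul {R : Type*} [CommRing R] {n : ℕ} (A B : Matrix (Fin n) (Fin n) R) (i : Fin n) :
    (A * B) i = Matrix.vecMul (A i) B := by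
  funext j
  simp [Matrix.mul_apply, Matrix.vecMul, dotProduct]

lemma extendLocal {R : Type*} [CommRing R] [Fintype R]
    (hln : ∀ y : R, IsUnit y ∨ IsNilpotent y) :
    ∀ (m n : ℕ) (hmn : m ≤ n) (v : Fin m → Fin n → R), LinearIndependent R v →
    ∃ w : Fin n → Fin n → R, (∀ i, w (Fin.castLE hmn i) = v i) ∧
      IsUnit (Matrix.of w : Matrix (Fin n) (Fin n) R) := by
  intro m
  induction m with
  | zero =>
    intro n hmn v hv
    exact ⟨fun i j => (1 : Matrix (Fin n) (Fin n) R) i j,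
      fun i => i.elim0, by
        have h : (Matrix.of fun i j => (1 : Matrix (Fin n) (Fin n) R) i j)
            = (1 : Matrix (Fin n) (Fin n) R) := by ext i j; rfl
        rw [h]; exact isUnit_one⟩
  | succ m ih =>
    intro n hmn v hv
    rcases subsingleton_or_nontrivial R with hR | hR
    · refine ⟨fun i j => (1 : Matrix (Fin n) (Fin n) R) i j, fun i => ?_, ?_⟩
      · funext j; exact Subsingleton.elim _ _
      · exact ⟨1, Subsingleton.elim _ _⟩
    have hm : m ≤ n := le_trans (Nat.le_succ m) hmn
    obtain ⟨w, hw, hWu⟩ := ih n hm (v ∘ Fin.castSucc)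
      (hv.comp Fin.castSucc (Fin.castSucc_injective m))
    set W : Matrix (Fin n) (Fin n) R := Matrix.of w with hWdef
    obtain ⟨U0, hU0⟩ := id hWu
    set W' : Matrix (Fin n) (Fin n) R := ↑U0⁻¹ with hW'def
    have hWW' : W * W' = 1 := by rw [← hU0]; exact_mod_cast U0.mul_inv
    have hW'W : W' * W = 1 := by rw [← hU0]; exact_mod_cast U0.inv_mul
    set z' : Fin n → R := Matrix.vecMul (v (Fin.last m)) W' with hz'def
    -- rows of W become std basis vectors after multiplying by W'
    have fact0 : ∀ i : Fin m, Matrix.vecMul (v (Fin.castSucc i)) W'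
        = (1 : Matrix (Fin n) (Fin n) R) (Fin.castLE hm i) := by
      intro i
      have : v (Fin.castSucc i) = W (Fin.castLE hm i) := (hw i).symm
      rw [this, ← row_mul, hWW']
    -- injectivity of vecMul · W'
    have hinj : ∀ x : Fin n → R, Matrix.vecMul x W' = 0 → x = 0 := by
      intro x hx
      have : Matrix.vecMul (Matrix.vecMul x W') W = Matrix.vecMul x (W' * W) :=
        Matrix.vecMul_vecMul x W' W
      rw [hx, hW'W, Matrix.vecMul_one] at this
      rw [← this, Matrix.zero_vecMul]
    -- the key annihilator fact
    have key : ∀ r : R, (∀ j : Fin n, m ≤ (j : ℕ) → r * z' j = 0) → r = 0 := by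
      intro r hr
      set g : Fin (m + 1) → R :=
        Fin.snoc (fun i : Fin m => -(r * z' (Fin.castLE hm i))) r with hgdef
      have hsum : ∑ i, g i • v i = 0 := by
        apply hinj
        have hlin : Matrix.vecMul (∑ i, g i • v i) W'
            = ∑ i, g i • Matrix.vecMul (v i) W' := by
          rw [← Matrix.vecMulLinear_apply, map_sum]
          congr 1; funext i
          rw [_root_.map_smul, Matrix.vecMulLinear_apply]
        rw [hlin, Fin.sum_univ_castSucc]
        simp only [hgdef, Fin.snoc_castSucc, Fin.snoc_last]
        funext j
        simp only [Pi.add_apply, Finset.sum_apply, Pi.smul_apply, smul_eq_mul,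
          fact0, hz'def, Pi.zero_apply]
        by_cases hj : (j : ℕ) < m
        · rw [Finset.sum_eq_single (⟨(j : ℕ), hj⟩ : Fin m)]
          · simp [Matrix.one_apply, Fin.ext_iff]
          · intro b _ hb
            have : Fin.castLE hm b ≠ j := by
              simp [Fin.ext_iff] at hb ⊢; omega
            simp [Matrix.one_apply, this]
          · simp
        · rw [Finset.sum_eq_zero, hr j (by omega)]
          · ring
          · intro b _
            have : Fin.castLE hm b ≠ j := by
              simp [Fin.ext_iff]; omega
            simp [Matrix.one_apply, this]
      have := Fintype.linearIndependent_iff.mp hv g hsum (Fin.last m)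
      simpa [hgdef] using this
    -- find a unit coordinate in the tail
    have hj₀ : ∃ j₀ : Fin n, m ≤ (j₀ : ℕ) ∧ IsUnit (z' j₀) := by
      by_contra hno
      push_neg at hno
      classical
      obtain ⟨r, hr0, hrann⟩ := common_ann
        (Finset.univ.filter fun j : Fin n => m ≤ (j : ℕ)) z'
        (by
          intro j hj
          simp only [Finset.mem_filter] at hj
          rcases hln (z' j) with h | h
          · exact absurd h (hno j hj.2)
          · exact h)
      exact hr0 (key r fun j hj => hrann j (by simp [hj]))
    obtain ⟨j₀, hj₀m, hj₀u⟩ := hj₀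
    set U' : Matrix (Fin n) (Fin n) R := (1 : Matrix (Fin n) (Fin n) R).updateRow j₀ z'
      with hU'def
    have hdetU' : U'.det = z' j₀ := by
      have hz : z' = ∑ k, z' k • (1 : Matrix (Fin n) (Fin n) R) k := by
        funext j
        simp [Matrix.one_apply, Finset.sum_apply]
      calc U'.det = ((1 : Matrix (Fin n) (Fin n) R).updateRow j₀
            (∑ k, z' k • (1 : Matrix (Fin n) (Fin n) R) k)).det := by rw [hU'def, ← hz]
        _ = z' j₀ • (1 : Matrix (Fin n) (Fin n) R).det := Matrix.det_updateRow_sum _ _ _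
        _ = z' j₀ := by simp
    set σ : Equiv.Perm (Fin n) := Equiv.swap (⟨m, by omega⟩ : Fin n) j₀ with hσdef
    set U : Matrix (Fin n) (Fin n) R := Matrix.of fun i => U' (σ i) with hUdef
    have hdetU : IsUnit U.det := by
      have : U.det = (σ.sign : ℤ) * U'.det := by
        rw [hUdef]; exact Matrix.det_permute σ U'
      rw [this, hdetU']
      refine IsUnit.mul ?_ hj₀u
      rcases Int.units_eq_one_or σ.sign with h | h <;> rw [h] <;> simp
    have hUu : IsUnit U := (Matrix.isUnit_iff_isUnit_det U).mpr hdetU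
    refine ⟨fun i => Matrix.vecMul (U i) W, fun i => ?_, ?_⟩
    · -- rows agree with v
      have hcast : ∀ i' : Fin m, Fin.castLE hmn (Fin.castSucc i') = Fin.castLE hm i' := by
        intro i'; simp [Fin.ext_iff]
      induction i using Fin.lastCases with
      | last =>
        have h2 : U (⟨m, by omega⟩ : Fin n) = z' := by
          show U' (σ (⟨m, by omega⟩ : Fin n)) = z'
          rw [hσdef, Equiv.swap_apply_left, hU'def, Matrix.updateRow_self]
        show Matrix.vecMul (U (⟨m, by omega⟩ : Fin n)) W = v (Fin.last m)
        simp only [h2, hz'def, Matrix.vecMul_vecMul, hW'W, Matrix.vecMul_one]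
      | cast i' =>
        show Matrix.vecMul (U (Fin.castLE hmn (Fin.castSucc i'))) W = v (Fin.castSucc i')
        rw [hcast i']
        set c : Fin n := Fin.castLE hm i' with hcdef
        have hcv : (c : ℕ) < m := i'.isLt
        have hc1 : c ≠ (⟨m, by omega⟩ : Fin n) := by
          intro h
          have : (c : ℕ) = m := by rw [h]
          omega
        have hc2 : c ≠ j₀ := by
          intro h; rw [h] at hcv; omega
        have h2 : U c = (1 : Matrix (Fin n) (Fin n) R) c := by
          show U' (σ c) = (1 : Matrix (Fin n) (Fin n) R) c
          rw [hσdef, Equiv.swap_apply_of_ne_of_ne hc1 hc2, hU'def,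
            Matrix.updateRow_ne hc2]
        rw [h2]
        have : Matrix.vecMul ((1 : Matrix (Fin n) (Fin n) R) c) W = W c := by
          rw [← row_mul, one_mul]
        rw [this]
        exact hw i'
    · -- unimodularity
      have : (Matrix.of fun i => Matrix.vecMul (U i) W) = U * W := by
        ext i j
        rw [row_mul]
        rfl
      rw [this]
      exact hUu.mul ⟨U0, hU0⟩

lemma indep_quot {R : Type*} [CommRing R] {m n : ℕ} (e : R) (he : e * e = e)
    (v : Fin m → Fin n → R) (hv : LinearIndependent R v) :
    LinearIndependent (R ⧸ Ideal.span {e})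
      (fun i j => Ideal.Quotient.mk (Ideal.span {e}) (v i j)) := by
  rw [Fintype.linearIndependent_iff]
  intro g hg i
  obtain ⟨c, hc⟩ : ∃ c : Fin m → R, ∀ i, Ideal.Quotient.mk (Ideal.span {e}) (c i) = g i :=
    ⟨fun i => (Ideal.Quotient.mk_surjective (g i)).choose,
      fun i => (Ideal.Quotient.mk_surjective (g i)).choose_spec⟩
  have hmem : ∀ j : Fin n, (∑ i, c i * v i j) ∈ Ideal.span {e} := by
    intro j
    rw [← Ideal.Quotient.eq_zero_iff_mem, map_sum]
    have := congrFun hg j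
    simpa [hc] using this
  have hz : ∀ i, (1 - e) * c i = 0 := by
    have : ∑ i, ((1 - e) * c i) • v i = 0 := by
      funext j
      simp only [Finset.sum_apply, Pi.smul_apply, smul_eq_mul, Pi.zero_apply]
      obtain ⟨s, hs⟩ := Ideal.mem_span_singleton'.mp (hmem j)
      calc ∑ i, (1 - e) * c i * v i j = (1 - e) * ∑ i, c i * v i j := by
            rw [Finset.mul_sum]; congr 1; funext i; ring
        _ = (1 - e) * (s * e) := by rw [hs]
        _ = s * (e - e * e) := by ring
        _ = 0 := by rw [he]; ring
    exact Fintype.linearIndependent_iff.mp hv _ this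
  have : c i = e * c i := by
    have := hz i; linear_combination this
  rw [← hc i, Ideal.Quotient.eq_zero_iff_mem, this]
  exact Ideal.mul_mem_right _ _ (Ideal.subset_span rfl)

lemma isUnit_glue {R : Type*} [CommRing R] (e : R) (he : e * e = e) (d : R)
    (h1 : IsUnit (Ideal.Quotient.mk (Ideal.span {e}) d))
    (h2 : IsUnit (Ideal.Quotient.mk (Ideal.span {1 - e}) d)) : IsUnit d := by
  obtain ⟨x, hx⟩ : ∃ x : R, x * d - 1 ∈ Ideal.span {e} := by
    obtain ⟨u, hu⟩ := h1
    obtain ⟨x, hxx⟩ := Ideal.Quotient.mk_surjective (↑u⁻¹ : R ⧸ Ideal.span {e})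
    refine ⟨x, ?_⟩
    rw [← Ideal.Quotient.eq_zero_iff_mem, map_sub, _root_.map_mul, hxx, ← hu, _root_.map_one]
    simp
  obtain ⟨y, hy⟩ : ∃ y : R, y * d - 1 ∈ Ideal.span {1 - e} := by
    obtain ⟨u, hu⟩ := h2
    obtain ⟨y, hyy⟩ := Ideal.Quotient.mk_surjective (↑u⁻¹ : R ⧸ Ideal.span {1 - e})
    refine ⟨y, ?_⟩
    rw [← Ideal.Quotient.eq_zero_iff_mem, map_sub, _root_.map_mul, hyy, ← hu, _root_.map_one]
    simp
  obtain ⟨s, hs⟩ := Ideal.mem_span_singleton'.mp hx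
  obtain ⟨t, ht⟩ := Ideal.mem_span_singleton'.mp hy
  refine IsUnit.of_mul_eq_one (a := d) ((1 - e) * x + e * y) ?_
  linear_combination (e - 1) * hs - e * ht - (s + t) * he





universe u

lemma auxMain : ∀ (k : ℕ) (R : Type u) (_ : CommRing R) (_ : Fintype R),
    Fintype.card R ≤ k →
    ∀ (m n : ℕ) (hmn : m ≤ n) (v : Fin m → Fin n → R), LinearIndependent R v →
    ∃ w : Fin n → Fin n → R, (∀ i, w (Fin.castLE hmn i) = v i) ∧
      IsUnit (Matrix.of w : Matrix (Fin n) (Fin n) R) := by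
  intro k
  induction k with
  | zero =>
    intro R _ _ hcard
    exact absurd hcard (by simpa using Fintype.card_pos (α := R))
  | succ k ih =>
    intro R _ _ hcard m n hmn v hv
    rcases idem_or_unit_nilpotent (R := R) with ⟨e, he, he0, he1⟩ | hln
    · -- split along the idempotent
      set I₁ : Ideal R := Ideal.span {e} with hI₁
      set I₂ : Ideal R := Ideal.span {1 - e} with hI₂
      haveI : Finite (R ⧸ I₁) := Quotient.finite _
      haveI : Finite (R ⧸ I₂) := Quotient.finite _
      letI F1 : Fintype (R ⧸ I₁) := Fintype.ofFinite _
      letI F2 : Fintype (R ⧸ I₂) := Fintype.ofFinite _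
      have hcard1 : Fintype.card (R ⧸ I₁) ≤ k := by
        have : Fintype.card (R ⧸ I₁) < Fintype.card R := by
          apply Fintype.card_lt_of_surjective_not_injective _ Ideal.Quotient.mk_surjective
          intro hinj
          apply he0
          apply hinj
          rw [map_zero, Ideal.Quotient.eq_zero_iff_mem]
          exact Ideal.subset_span rfl
        omega
      have hcard2 : Fintype.card (R ⧸ I₂) ≤ k := by
        have : Fintype.card (R ⧸ I₂) < Fintype.card R := by
          apply Fintype.card_lt_of_surjective_not_injective _ Ideal.Quotient.mk_surjective
          intro hinj
          apply he1
          have := hinj (a₁ := 1 - e) (a₂ := 0) (by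
            rw [map_zero, Ideal.Quotient.eq_zero_iff_mem]
            exact Ideal.subset_span rfl)
          have h10 : (1 : R) - e = 0 := this
          linear_combination -h10
        omega
      have he' : (1 - e) * (1 - e) = 1 - e := by linear_combination he
      have he'' : (1 : R) - (1 - e) = e := by ring
      obtain ⟨w₁, hw₁, hu₁⟩ := ih (R ⧸ I₁) _ F1 hcard1 m n hmn _ (indep_quot e he v hv)
      obtain ⟨w₂, hw₂, hu₂⟩ := ih (R ⧸ I₂) _ F2 hcard2 m n hmn _ (indep_quot (1 - e) he' v hv)
      obtain ⟨a, ha⟩ : ∃ a : Fin n → Fin n → R,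
          ∀ i j, Ideal.Quotient.mk I₁ (a i j) = w₁ i j :=
        ⟨fun i j => (Ideal.Quotient.mk_surjective (w₁ i j)).choose,
          fun i j => (Ideal.Quotient.mk_surjective (w₁ i j)).choose_spec⟩
      obtain ⟨b, hb⟩ : ∃ b : Fin n → Fin n → R,
          ∀ i j, Ideal.Quotient.mk I₂ (b i j) = w₂ i j :=
        ⟨fun i j => (Ideal.Quotient.mk_surjective (w₂ i j)).choose,
          fun i j => (Ideal.Quotient.mk_surjective (w₂ i j)).choose_spec⟩
      set wf : Fin n → Fin n → R := fun i j =>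
        if h : (i : ℕ) < m then v ⟨(i : ℕ), h⟩ j
        else (1 - e) * a i j + e * b i j with hwf
      have hmk1 : ∀ i j, Ideal.Quotient.mk I₁ (wf i j) = w₁ i j := by
        intro i j
        by_cases h : (i : ℕ) < m
        · have hc : Fin.castLE hmn (⟨(i : ℕ), h⟩ : Fin m) = i := rfl
          simp only [hwf, dif_pos h]
          have := congrFun (hw₁ ⟨(i : ℕ), h⟩) j
          rw [hc] at this
          rw [← this]
        · simp only [hwf, dif_neg h]
          have hee : Ideal.Quotient.mk I₁ e = 0 := by
            rw [Ideal.Quotient.eq_zero_iff_mem]; exact Ideal.subset_span rfl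
          rw [map_add, _root_.map_mul, _root_.map_mul, map_sub, _root_.map_one, hee,
            ha i j]
          ring
      have hmk2 : ∀ i j, Ideal.Quotient.mk I₂ (wf i j) = w₂ i j := by
        intro i j
        by_cases h : (i : ℕ) < m
        · have hc : Fin.castLE hmn (⟨(i : ℕ), h⟩ : Fin m) = i := rfl
          simp only [hwf, dif_pos h]
          have := congrFun (hw₂ ⟨(i : ℕ), h⟩) j
          rw [hc] at this
          rw [← this]
        · simp only [hwf, dif_neg h]
          have hee : Ideal.Quotient.mk I₂ (1 - e) = 0 := by
            rw [Ideal.Quotient.eq_zero_iff_mem]; exact Ideal.subset_span rfl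
          have hee1 : Ideal.Quotient.mk I₂ e = 1 := by
            have h0 := hee
            rw [map_sub, _root_.map_one] at h0
            linear_combination -h0
          rw [map_add, _root_.map_mul, _root_.map_mul, hee, hee1, hb i j]
          ring
      refine ⟨wf, ?_, ?_⟩
      · intro i
        funext j
        have h : ((Fin.castLE hmn i : Fin n) : ℕ) < m := i.isLt
        simp only [hwf, dif_pos h]
        have hieq : (⟨((Fin.castLE hmn i : Fin n) : ℕ), h⟩ : Fin m) = i := by
          apply Fin.ext; rfl
        rw [hieq]
      · rw [Matrix.isUnit_iff_isUnit_det]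
        apply isUnit_glue e he
        · have : Ideal.Quotient.mk I₁ (Matrix.of wf).det
              = (Matrix.of w₁ : Matrix (Fin n) (Fin n) (R ⧸ I₁)).det := by
            rw [RingHom.map_det]
            congr 1
            ext i j
            exact hmk1 i j
          have h := (Matrix.isUnit_iff_isUnit_det (Matrix.of w₁)).mp hu₁
          rw [← this] at h
          exact h
        · have : Ideal.Quotient.mk I₂ (Matrix.of wf).det
              = (Matrix.of w₂ : Matrix (Fin n) (Fin n) (R ⧸ I₂)).det := by
            rw [RingHom.map_det]
            congr 1
            ext i j
            exact hmk2 i j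
          have h := (Matrix.isUnit_iff_isUnit_det (Matrix.of w₂)).mp hu₂
          rw [← this] at h
          exact h
    · exact extendLocal hln m n hmn v hv

theorem extend_to_unimodular_basis {R : Type*} [CommRing R] [Fintype R]
    {m n : ℕ} (hmn : m ≤ n) (v : Fin m → (Fin n → R))
    (hv : LinearIndependent R v) :
    ∃ w : Fin n → (Fin n → R),
      (∀ i : Fin m, w (Fin.castLE hmn i) = v i) ∧
        IsUnit (Matrix.of w : Matrix (Fin n) (Fin n) R) := by
  exact auxMain (Fintype.card R) R _ _ le_rfl m n hmn v hv
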